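/- For positive reals a, b with s·a ≤ b ≤ t·a for some 0 < s ≤ t, and v ∈ [0,1]: (1-v)a + vb - a^(1-v)b^v ≤ max{g_v(s), g_v(t)}·a, where g_v(x) = (1-v) + vx - x^v. -/

import Mathlib

theorem stmt_14 (a b s t v : ℝ) (ha : 0 < a) (hb : 0 < b)
    (hs : 0 < s) (hst : s ≤ t)
    (hsa : s * a ≤ b) (hbt : b ≤ t * a) (hv0 : 0 ≤ v) (hv1 : v ≤ 1) :
    (1 - v) * a + v * b - a ^ (1 - v) * b ^ v ≤
      max ((1 - v) + v * s - s ^ v) ((1 - v) + v * t - t ^ v) * a := by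
  set x := b / a with hx
  have hxs : s ≤ x := (le_div_iff₀ ha).2 hsa
  have hxt : x ≤ t := (div_le_iff₀ ha).2 hbt
  have hxpos : 0 < x := div_pos hb ha
  -- convexity of g
  have hconv : ConvexOn ℝ (Set.Ici 0) (fun y : ℝ ↦ (1 - v) + v * y - y ^ v) := by
    have h1 : ConvexOn ℝ (Set.Ici 0) (fun y : ℝ ↦ (1 - v) + v * y) :=
      (convexOn_const _ (convex_Ici 0)).add ((convexOn_id (convex_Ici 0)).smul hv0)
    exact h1.sub (Real.concaveOn_rpow hv0 hv1)
  have hseg : x ∈ segment ℝ s t := by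
    rw [segment_eq_Icc hst]; exact ⟨hxs, hxt⟩
  have hkey : (1 - v) + v * x - x ^ v ≤
      max ((1 - v) + v * s - s ^ v) ((1 - v) + v * t - t ^ v) :=
    hconv.le_on_segment (Set.mem_Ici.2 hs.le) (Set.mem_Ici.2 (hs.trans_le hst).le) hseg
  have hrw : (1 - v) * a + v * b - a ^ (1 - v) * b ^ v =
      ((1 - v) + v * x - x ^ v) * a := by
    have hbax : b = x * a := by rw [hx]; field_simp
    have : a ^ (1 - v) * b ^ v = x ^ v * a := by
      rw [hbax, Real.mul_rpow hxpos.le ha.le]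
      rw [show a ^ (1 - v) * (x ^ v * a ^ v) = x ^ v * (a ^ (1 - v) * a ^ v) by ring,
        ← Real.rpow_add ha]
      norm_num
    rw [this, hbax]; ring
  rw [hrw]
  exact mul_le_mul_of_nonneg_right hkey ha.le
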